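/- arXiv:2303.05148 — 2 statements merged into one kernel-verified Lean document; each statement's English description precedes it below -/
import Mathlib

section
/- Let θ₀ ∈ ℝ, and for each (i, j) ∈ Fin n × Fin n let p i j : ℝ → ℝ be differentiable at θ₀. Define P(θ) = Σ_{σ ∈ Equiv.Perm (Fin n)} ∏_{i} p i (σ i) θ. Then P is differentiable at θ₀ with P'(θ₀) = Σ_{i} Σ_{j} (deriv (p i j) θ₀) · (Σ_{σ ∈ Equiv.Perm (Fin n) with σ i = j} ∏_{i' ≠ i} p i' (σ i') θ₀). -/
theorem stmt_8 (n : ℕ) (θ₀ : ℝ) (p : Fin n → Fin n → ℝ → ℝ)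
    (hp : ∀ i j, DifferentiableAt ℝ (p i j) θ₀) :
    DifferentiableAt ℝ (fun θ => ∑ σ : Equiv.Perm (Fin n), ∏ i, p i (σ i) θ) θ₀ ∧
    deriv (fun θ => ∑ σ : Equiv.Perm (Fin n), ∏ i, p i (σ i) θ) θ₀ =
      ∑ i : Fin n, ∑ j : Fin n,
        deriv (p i j) θ₀ *
          ∑ σ ∈ Finset.univ.filter (fun σ : Equiv.Perm (Fin n) => σ i = j),
            ∏ i' ∈ Finset.univ.erase i, p i' (σ i') θ₀ := by
  have hprod : ∀ σ : Equiv.Perm (Fin n),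
      HasDerivAt (fun θ => ∏ i, p i (σ i) θ)
        (∑ i : Fin n, (∏ i' ∈ Finset.univ.erase i, p i' (σ i') θ₀) •
          deriv (p i (σ i)) θ₀) θ₀ := by
    intro σ
    exact HasDerivAt.fun_finsetProd fun i _ => (hp i (σ i)).hasDerivAt
  have hsum : HasDerivAt (fun θ => ∑ σ : Equiv.Perm (Fin n), ∏ i, p i (σ i) θ)
      (∑ σ : Equiv.Perm (Fin n), ∑ i : Fin n,
        (∏ i' ∈ Finset.univ.erase i, p i' (σ i') θ₀) • deriv (p i (σ i)) θ₀) θ₀ :=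
    HasDerivAt.fun_sum fun σ _ => hprod σ
  refine ⟨hsum.differentiableAt, ?_⟩
  rw [hsum.deriv, Finset.sum_comm]
  refine Finset.sum_congr rfl fun i _ => ?_
  rw [← Finset.sum_fiberwise (Finset.univ : Finset (Equiv.Perm (Fin n)))
    (fun σ => σ i) (fun σ => (∏ i' ∈ Finset.univ.erase i, p i' (σ i') θ₀) •
      deriv (p i (σ i)) θ₀)]
  refine Finset.sum_congr rfl fun j _ => ?_
  rw [Finset.mul_sum]
  refine Finset.sum_congr rfl fun σ hσ => ?_
  simp only [Finset.mem_filter] at hσ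
  rw [hσ.2, smul_eq_mul, mul_comm]
end

section
/- Let θ₀ ∈ ℝ, let E be a finite set of labelings f : Fin n → Fin K, and for each (i, j) let p i j : ℝ → ℝ be differentiable at θ₀. Define P(θ) = Σ_{f ∈ E} ∏_{i} p i (f i) θ and assume P(θ₀) > 0. Then the loss L(θ) = − Real.log (P θ) is differentiable at θ₀ with derivative L'(θ₀) = − (Σ_{i} Σ_{j} (deriv (p i j) θ₀) · C i j) / P(θ₀), where C i j = Σ_{f ∈ E with f i = j} ∏_{i' ≠ i} p i' (f i') θ₀. -/
theorem stmt_9 (n K : ℕ) (θ₀ : ℝ) (E : Finset (Fin n → Fin K))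
    (p : Fin n → Fin K → ℝ → ℝ) (hp : ∀ i j, DifferentiableAt ℝ (p i j) θ₀)
    (hP : 0 < ∑ f ∈ E, ∏ i, p i (f i) θ₀) :
    DifferentiableAt ℝ (fun θ => -Real.log (∑ f ∈ E, ∏ i, p i (f i) θ)) θ₀ ∧
    deriv (fun θ => -Real.log (∑ f ∈ E, ∏ i, p i (f i) θ)) θ₀ =
      -(∑ i : Fin n, ∑ j : Fin K,
          deriv (p i j) θ₀ *
            ∑ f ∈ E.filter (fun f => f i = j),
              ∏ i' ∈ Finset.univ.erase i, p i' (f i') θ₀) /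
        (∑ f ∈ E, ∏ i, p i (f i) θ₀) := by
  have hPne : (∑ f ∈ E, ∏ i, p i (f i) θ₀) ≠ 0 := ne_of_gt hP
  have hprod : ∀ f : Fin n → Fin K,
      HasDerivAt (fun θ => ∏ i, p i (f i) θ)
        (∑ i : Fin n, (∏ i' ∈ Finset.univ.erase i, p i' (f i') θ₀) • deriv (p i (f i)) θ₀) θ₀ :=
    fun f => HasDerivAt.fun_finsetProd (fun i _ => (hp i (f i)).hasDerivAt)
  have hPd : HasDerivAt (fun θ => ∑ f ∈ E, ∏ i, p i (f i) θ)
      (∑ f ∈ E, ∑ i : Fin n,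
        (∏ i' ∈ Finset.univ.erase i, p i' (f i') θ₀) • deriv (p i (f i)) θ₀) θ₀ :=
    HasDerivAt.fun_sum (fun f _ => hprod f)
  have hL : HasDerivAt (fun θ => -Real.log (∑ f ∈ E, ∏ i, p i (f i) θ))
      (-((∑ f ∈ E, ∑ i : Fin n,
        (∏ i' ∈ Finset.univ.erase i, p i' (f i') θ₀) • deriv (p i (f i)) θ₀) /
          (∑ f ∈ E, ∏ i, p i (f i) θ₀))) θ₀ :=
    (hPd.log hPne).neg
  refine ⟨hL.differentiableAt, ?_⟩
  rw [hL.deriv]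
  rw [neg_div, neg_inj]
  congr 1
  rw [Finset.sum_comm]
  refine Finset.sum_congr rfl fun i _ => ?_
  rw [← Finset.sum_fiberwise E (fun f => f i)
    (fun f => (∏ i' ∈ Finset.univ.erase i, p i' (f i') θ₀) • deriv (p i (f i)) θ₀)]
  refine Finset.sum_congr rfl fun j _ => ?_
  rw [Finset.mul_sum]
  refine Finset.sum_congr rfl fun f hf => ?_
  rw [Finset.mem_filter] at hf
  rw [hf.2, smul_eq_mul, mul_comm]
end
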